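/- Let g ⊆ {0,1}^m × {0,1} be a partial Boolean function. Then the sabotage complexity RS(g) equals min over zero-error randomized algorithms 𝒯 for g (probability distributions over deterministic decision trees computing g) of the max over pairs of valid inputs x, y with g(x) ≠ g(y) of E_{T∼𝒯}[sep_T(x,y)]; and this quantity in turn equals max over probability distributions p on pairs (x,y) of valid inputs with g(x) = 0 and g(y) = 1 of min over deterministic decision trees T computing g of E_{(x,y)∼p}[sep_T(x,y)]. -/

import Mathlib

open Finset

inductive DTree (ι : Type) (S : Type) where
  | leaf : S → DTree ι S
  | node : ι → DTree ι S → DTree ι S → DTree ι S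

namespace DTree

/-- Evaluate a deterministic decision tree on an input. -/
def eval {ι S : Type} : DTree ι S → (ι → Bool) → S
  | leaf s, _ => s
  | node i t0 t1, x => if x i then t1.eval x else t0.eval x

/-- The depth (worst-case number of queries) of a decision tree. -/
def depth {ι S : Type} : DTree ι S → ℕ
  | leaf _ => 0
  | node _ t0 t1 => max t0.depth t1.depth + 1

/-- The number of queries a decision tree makes on a given input. -/
def queries {ι S : Type} : DTree ι S → (ι → Bool) → ℕ
  | leaf _, _ => 0
  | node i t0 t1, x => (if x i then t1.queries x else t0.queries x) + 1

end DTree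

/-- A probability distribution on a finite type, as a nonnegative real weight function summing to 1. -/
def IsDist {γ : Type} [Fintype γ] (μ : γ → ℝ) : Prop :=
  (∀ x, 0 ≤ μ x) ∧ ∑ x, μ x = 1

/-- The support of `μ` is contained in `A`. -/
def SuppIn {γ : Type} [Fintype γ] (μ : γ → ℝ) (A : Set γ) : Prop :=
  ∀ x, μ x ≠ 0 → x ∈ A

/-- `g⁻¹(b)` for a partial Boolean function given as a relation. -/
def preim {m : ℕ} (g : Set ((Fin m → Bool) × Bool)) (b : Bool) : Set (Fin m → Bool) :=
  {x | (x, b) ∈ g ∧ (x, !b) ∉ g}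

/-- `x` is a valid input of the partial Boolean function `g`. -/
def ValidIn {m : ℕ} (g : Set ((Fin m → Bool) × Bool)) (x : Fin m → Bool) : Prop :=
  x ∈ preim g false ∨ x ∈ preim g true

/-- A deterministic decision tree computes the partial Boolean function `g`. -/
def Computes {m : ℕ} (T : DTree (Fin m) Bool) (g : Set ((Fin m → Bool) × Bool)) : Prop :=
  ∀ b : Bool, ∀ x ∈ preim g b, T.eval x = b

/-- The paper's convention for partial Boolean functions: for every invalid input `y`, both
`(y,0)` and `(y,1)` belong to the relation (so that any output is accepted on invalid inputs).
`totalize g` adds all such pairs; it has the same valid inputs and the same `g⁻¹(b)` as `g`. -/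
def totalize {m : ℕ} (g : Set ((Fin m → Bool) × Bool)) : Set ((Fin m → Bool) × Bool) :=
  {p | p ∈ g ∨ ¬ ValidIn g p.1}

/-- The four-letter alphabet `{0, 1, *, †}` used for sabotaged inputs. -/
inductive Sab4 where
  | zero | one | star | dag
deriving DecidableEq

instance : Fintype Sab4 where
  elems := {Sab4.zero, Sab4.one, Sab4.star, Sab4.dag}
  complete := fun x => by cases x <;> simp

/-- Decision trees over the four-letter alphabet. -/
inductive QTree (ι : Type) (S : Type) where
  | leaf : S → QTree ι S
  | node : ι → (Sab4 → QTree ι S) → QTree ι S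

namespace QTree

def eval {ι S : Type} : QTree ι S → (ι → Sab4) → S
  | leaf s, _ => s
  | node i ch, w => (ch (w i)).eval w

def queries {ι S : Type} : QTree ι S → (ι → Sab4) → ℕ
  | leaf _, _ => 0
  | node i ch, w => (ch (w i)).queries w + 1

end QTree

/-- A Boolean string is consistent with the non-special coordinates of a sabotaged string. -/
def ConsistentWith {m : ℕ} (x : Fin m → Bool) (w : Fin m → Sab4) : Prop :=
  ∀ i, (w i = Sab4.zero → x i = false) ∧ (w i = Sab4.one → x i = true)

/-- `w` is a valid (sabotaged) input of `g_sab`: it contains exactly one kind of special symbol,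
and its special symbols can be filled in to produce a string in `g⁻¹(0)` and also one in `g⁻¹(1)`. -/
def SabValid {m : ℕ} (g : Set ((Fin m → Bool) × Bool)) (w : Fin m → Sab4) : Prop :=
  (((∃ i, w i = Sab4.star) ∧ ∀ i, w i ≠ Sab4.dag) ∨
    ((∃ i, w i = Sab4.dag) ∧ ∀ i, w i ≠ Sab4.star)) ∧
  (∃ x ∈ preim g false, ConsistentWith x w) ∧ (∃ y ∈ preim g true, ConsistentWith y w)

/-- A tree computes `g_sab`: on every sabotaged input it outputs the special symbol it contains
(`false` encoding `*` and `true` encoding `†`). -/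
def SabComputes {m : ℕ} (T : QTree (Fin m) Bool) (g : Set ((Fin m → Bool) × Bool)) : Prop :=
  ∀ w : Fin m → Sab4, SabValid g w →
    (((∃ i, w i = Sab4.star) → T.eval w = false) ∧ ((∃ i, w i = Sab4.dag) → T.eval w = true))

/-- Sabotage complexity `RS(g) = R_0(g_sab)`: the least `c` such that some (finitely supported)
zero-error randomized algorithm for `g_sab` makes at most `c` expected queries on every
sabotaged input. -/
noncomputable def RS {m : ℕ} (g : Set ((Fin m → Bool) × Bool)) : ℝ :=
  sInf { c : ℝ | ∃ (k : ℕ) (wt : Fin k → ℝ) (T : Fin k → QTree (Fin m) Bool),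
    IsDist wt ∧ (∀ i, SabComputes (T i) g) ∧
    ∀ w : Fin m → Sab4, SabValid g w → ∑ i, wt i * ((T i).queries w : ℝ) ≤ c }

/-- `sep T x y`: the depth (root has depth 1) of the node of `T` reached by both `x` and `y`
at which the queried coordinate of `x` and `y` differ (0 if a leaf is reached first). -/
def sep {m : ℕ} {S : Type} : DTree (Fin m) S → (Fin m → Bool) → (Fin m → Bool) → ℕ
  | .leaf _, _, _ => 0
  | .node j t0 t1, x, y =>
      if x j = y j then (if x j then sep t1 x y else sep t0 x y) + 1 else 1



section Aux
variable {m : ℕ}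

/-- Encode a bit as a `Sab4` letter. -/
def bit (b : Bool) : Sab4 := if b then Sab4.one else Sab4.zero

/-- Convert a deterministic tree computing `g` into a tree for `g_sab`. -/
def toQ : DTree (Fin m) Bool → QTree (Fin m) Bool
  | .leaf _ => .leaf false
  | .node i t0 t1 => .node i (fun s => match s with
      | .zero => toQ t0
      | .one => toQ t1
      | .star => .leaf false
      | .dag => .leaf true)

lemma toQ_queries_le (T : DTree (Fin m) Bool) (x y : Fin m → Bool) (w : Fin m → Sab4)
    (hx : ConsistentWith x w) (hy : ConsistentWith y w) :
    (toQ T).queries w ≤ sep T x y := by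
  induction T with
  | leaf s => simp [toQ, QTree.queries, sep]
  | node i t0 t1 ih0 ih1 =>
    rcases hwi : w i with _ | _ | _ | _
    · have hxi := (hx i).1 hwi
      have hyi := (hy i).1 hwi
      simp [toQ, QTree.queries, hwi, sep, hxi, hyi, ih0]
    · have hxi := (hx i).2 hwi
      have hyi := (hy i).2 hwi
      simp [toQ, QTree.queries, hwi, sep, hxi, hyi, ih1]
    · by_cases h : x i = y i <;> simp [toQ, QTree.queries, hwi, sep, h]
    · by_cases h : x i = y i <;> simp [toQ, QTree.queries, hwi, sep, h]

lemma toQ_eval (T : DTree (Fin m) Bool) (x y : Fin m → Bool) (w : Fin m → Sab4)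
    (hx : ConsistentWith x w) (hy : ConsistentWith y w) (hne : T.eval x ≠ T.eval y) :
    ((∀ i, w i ≠ Sab4.dag) → (toQ T).eval w = false) ∧
    ((∀ i, w i ≠ Sab4.star) → (toQ T).eval w = true) := by
  induction T with
  | leaf s => simp [DTree.eval] at hne
  | node i t0 t1 ih0 ih1 =>
    rcases hwi : w i with _ | _ | _ | _
    · have hxi := (hx i).1 hwi
      have hyi := (hy i).1 hwi
      have hne0 : t0.eval x ≠ t0.eval y := by
        simpa [DTree.eval, hxi, hyi] using hne
      simpa [toQ, QTree.eval, hwi] using ih0 hne0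
    · have hxi := (hx i).2 hwi
      have hyi := (hy i).2 hwi
      have hne1 : t1.eval x ≠ t1.eval y := by
        simpa [DTree.eval, hxi, hyi] using hne
      simpa [toQ, QTree.eval, hwi] using ih1 hne1
    · constructor
      · intro _; simp [toQ, QTree.eval, hwi]
      · intro h; exact absurd hwi (h i)
    · constructor
      · intro h; exact absurd hwi (h i)
      · intro _; simp [toQ, QTree.eval, hwi]

lemma toQ_computes {g : Set ((Fin m → Bool) × Bool)} {T : DTree (Fin m) Bool}
    (hT : Computes T g) : SabComputes (toQ T) g := by
  intro w hw
  obtain ⟨hspec, ⟨x, hx, hxc⟩, ⟨y, hy, hyc⟩⟩ := hw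
  have hne : T.eval x ≠ T.eval y := by
    rw [hT false x hx, hT true y hy]; simp
  have key := toQ_eval T x y w hxc hyc hne
  constructor
  · rintro ⟨i, hi⟩
    rcases hspec with ⟨_, hnd⟩ | ⟨_, hns⟩
    · exact key.1 hnd
    · exact absurd hi (hns i)
  · rintro ⟨i, hi⟩
    rcases hspec with ⟨_, hnd⟩ | ⟨_, hns⟩
    · exact absurd hi (hnd i)
    · exact key.2 hns

end Aux

section Aux2
variable {m : ℕ}

/-- `x` is consistent with the partial assignment `ρ`. -/
def Consist {m : ℕ} (ρ : Fin m → Option Bool) (x : Fin m → Bool) : Prop :=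
  ∀ i b, ρ i = some b → x i = b

open Classical in
/-- Convert a tree for `g_sab` into a deterministic tree computing `g`. -/
noncomputable def toD (g : Set ((Fin m → Bool) × Bool)) :
    QTree (Fin m) Bool → (Fin m → Option Bool) → DTree (Fin m) Bool
  | .leaf _, ρ => .leaf (if ∃ y ∈ preim g true, Consist ρ y then true else false)
  | .node i ch, ρ => .node i (toD g (ch Sab4.zero) (Function.update ρ i (some false)))
                             (toD g (ch Sab4.one) (Function.update ρ i (some true)))

/-- Mix two Boolean strings into a sabotaged input with stars where they differ. -/
def mix (x y : Fin m → Bool) : Fin m → Sab4 :=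
  fun i => if x i = y i then bit (x i) else Sab4.star

lemma consistentWith_mix_left (x y : Fin m → Bool) : ConsistentWith x (mix x y) := by
  intro i
  by_cases hxy : x i = y i
  · have h1 : mix x y i = bit (x i) := if_pos hxy
    rw [h1]
    cases hb : x i <;> simp [bit, hb]
  · have h1 : mix x y i = Sab4.star := if_neg hxy
    simp [h1]

lemma consistentWith_mix_right (x y : Fin m → Bool) : ConsistentWith y (mix x y) := by
  intro i
  by_cases hxy : x i = y i
  · have h1 : mix x y i = bit (y i) := by rw [show mix x y i = bit (x i) from if_pos hxy, hxy]
    rw [h1]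
    cases hb : y i <;> simp [bit, hb]
  · have h1 : mix x y i = Sab4.star := if_neg hxy
    simp [h1]

lemma preim_disjoint {g : Set ((Fin m → Bool) × Bool)} {x : Fin m → Bool}
    (h0 : x ∈ preim g false) (h1 : x ∈ preim g true) : False :=
  h0.2 h1.1

lemma mix_sabValid {g : Set ((Fin m → Bool) × Bool)} {x y : Fin m → Bool}
    (hx : x ∈ preim g false) (hy : y ∈ preim g true) : SabValid g (mix x y) := by
  have hxy : x ≠ y := by
    rintro rfl; exact preim_disjoint hx hy
  obtain ⟨i, hi⟩ : ∃ i, x i ≠ y i := by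
    by_contra h
    push_neg at h
    exact hxy (funext h)
  refine ⟨Or.inl ⟨⟨i, if_neg hi⟩, ?_⟩,
    ⟨x, hx, consistentWith_mix_left x y⟩, ⟨y, hy, consistentWith_mix_right x y⟩⟩
  intro j
  by_cases h : x j = y j
  · have h1 : mix x y j = bit (x j) := if_pos h
    rw [h1]
    cases hb : x j <;> simp [bit]
  · have h1 : mix x y j = Sab4.star := if_neg h
    simp [h1]

lemma sep_toD_le {g : Set ((Fin m → Bool) × Bool)} (x y : Fin m → Bool) :
    ∀ (T : QTree (Fin m) Bool) (ρ : Fin m → Option Bool),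
      sep (toD g T ρ) x y ≤ T.queries (mix x y) := by
  intro T
  induction T with
  | leaf s => intro ρ; simp [toD, sep, QTree.queries]
  | node i ch ih =>
    intro ρ
    simp only [toD, sep, QTree.queries]
    by_cases h : x i = y i
    · rw [if_pos h]
      have hmix : mix x y i = bit (x i) := if_pos h
      rw [hmix]
      cases hxi : x i
      · rw [if_neg (by simp [hxi])]
        exact Nat.add_le_add_right (ih Sab4.zero _) 1
      · rw [if_pos (by simp [hxi])]
        exact Nat.add_le_add_right (ih Sab4.one _) 1
    · rw [if_neg h]
      exact Nat.le_add_left 1 _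

lemma toD_computes {g : Set ((Fin m → Bool) × Bool)} :
    ∀ (T : QTree (Fin m) Bool) (ρ : Fin m → Option Bool),
      (∀ w : Fin m → Sab4, SabValid g w → (∀ j b, ρ j = some b → w j = bit b) →
        (((∃ i, w i = Sab4.star) → T.eval w = false) ∧
         ((∃ i, w i = Sab4.dag) → T.eval w = true))) →
      ∀ (b : Bool) (x : Fin m → Bool), x ∈ preim g b → Consist ρ x →
        (toD g T ρ).eval x = b := by
  intro T
  induction T with
  | leaf s =>
    intro ρ H b x hx hρx
    cases b
    · have hno : ¬ ∃ y ∈ preim g true, Consist ρ y := by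
        rintro ⟨y, hy, hρy⟩
        have hxy : x ≠ y := by rintro rfl; exact preim_disjoint hx hy
        have hnone : ∃ i, ρ i = none := by
          by_contra hall
          push_neg at hall
          apply hxy
          funext i
          rcases ho : ρ i with _ | c
          · exact absurd ho (hall i)
          · rw [hρx i c ho, hρy i c ho]
        obtain ⟨i0, hi0⟩ := hnone
        have hcons : ∀ (s : Sab4) (z : Fin m → Bool), Consist ρ z →
            s ≠ Sab4.zero → s ≠ Sab4.one →
            ConsistentWith z (fun j => (ρ j).elim s bit) := by
          intro s z hz hs0 hs1 j
          rcases ho : ρ j with _ | c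
          · constructor
            · intro h; exact absurd (by simpa [ho] using h) hs0
            · intro h; exact absurd (by simpa [ho] using h) hs1
          · cases c
            · constructor
              · intro _; exact hz j false ho
              · intro h; simp [ho, bit] at h
            · constructor
              · intro h; simp [ho, bit] at h
              · intro _; exact hz j true ho
        have hvalid : ∀ s : Sab4, s = Sab4.star ∨ s = Sab4.dag →
            SabValid g (fun j => (ρ j).elim s bit) := by
          intro s hs
          refine ⟨?_, ⟨x, hx, hcons s x hρx (by rcases hs with rfl | rfl <;> simp)
              (by rcases hs with rfl | rfl <;> simp)⟩,
            ⟨y, hy, hcons s y hρy (by rcases hs with rfl | rfl <;> simp)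
              (by rcases hs with rfl | rfl <;> simp)⟩⟩
          rcases hs with rfl | rfl
          · left
            refine ⟨⟨i0, by simp [hi0]⟩, ?_⟩
            intro j
            rcases ho : ρ j with _ | c
            · simp [ho]
            · cases c <;> simp [ho, bit]
          · right
            refine ⟨⟨i0, by simp [hi0]⟩, ?_⟩
            intro j
            rcases ho : ρ j with _ | c
            · simp [ho]
            · cases c <;> simp [ho, bit]
        have hagree : ∀ s : Sab4, ∀ j b', ρ j = some b' →
            (fun j => (ρ j).elim s bit) j = bit b' := by
          intro s j b' h; simp [h]
        have h1 := (H _ (hvalid Sab4.star (Or.inl rfl)) (hagree _)).1 ⟨i0, by simp [hi0]⟩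
        have h2 := (H _ (hvalid Sab4.dag (Or.inr rfl)) (hagree _)).2 ⟨i0, by simp [hi0]⟩
        simp only [QTree.eval] at h1 h2
        rw [h1] at h2
        exact Bool.false_ne_true h2
      simp [toD, DTree.eval, hno]
    · have hyes : ∃ y ∈ preim g true, Consist ρ y := ⟨x, hx, hρx⟩
      simp [toD, DTree.eval, hyes]
  | node i ch ih =>
    intro ρ H b x hx hρx
    have step : ∀ c : Bool, x i = c →
        (toD g (ch (bit c)) (Function.update ρ i (some c))).eval x = b := by
      intro c hc
      apply ih (bit c) (Function.update ρ i (some c)) ?_ b x hx ?_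
      · intro w hw hcons
        have hwi : w i = bit c := hcons i c (by simp)
        have key := H w hw ?_
        · constructor
          · intro hex
            have := key.1 hex
            simpa [QTree.eval, hwi] using this
          · intro hex
            have := key.2 hex
            simpa [QTree.eval, hwi] using this
        · intro j b' hj
          by_cases hji : j = i
          · subst hji
            have hbc : b' = c := by rw [← hρx j b' hj]; exact hc
            rw [hbc, hwi]
          · exact hcons j b' (by rw [Function.update_of_ne hji]; exact hj)
      · intro j b' hj
        by_cases hji : j = i
        · subst hji
          have : some c = some b' := by simpa [Function.update_self] using hj
          cases this
          exact hc
        · rw [Function.update_of_ne hji] at hj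
          exact hρx j b' hj
    cases hxi : x i
    · have := step false hxi
      simpa [toD, DTree.eval, hxi, bit] using this
    · have := step true hxi
      simpa [toD, DTree.eval, hxi, bit] using this

end Aux2

section Aux3
variable {m : ℕ}

lemma sep_comm (T : DTree (Fin m) Bool) (x y : Fin m → Bool) : sep T x y = sep T y x := by
  induction T with
  | leaf s => simp [sep]
  | node j t0 t1 ih0 ih1 =>
    by_cases h : x j = y j
    · rw [sep, sep, if_pos h, if_pos h.symm, ← h, ih0, ih1]
    · rw [sep, sep, if_neg h, if_neg (fun hh => h hh.symm)]

lemma sep_le_depth (T : DTree (Fin m) Bool) (x y : Fin m → Bool) : sep T x y ≤ T.depth := by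
  induction T with
  | leaf s => simp [sep, DTree.depth]
  | node j t0 t1 ih0 ih1 =>
    rw [sep, DTree.depth]
    by_cases h : x j = y j
    · rw [if_pos h]
      cases hx : x j
      · rw [if_neg Bool.false_ne_true]
        exact Nat.add_le_add_right (le_trans ih0 (le_max_left _ _)) 1
      · rw [if_pos rfl]
        exact Nat.add_le_add_right (le_trans ih1 (le_max_right _ _)) 1
    · rw [if_neg h]
      exact Nat.le_add_left 1 _

lemma sep_pos {g : Set ((Fin m → Bool) × Bool)} {T : DTree (Fin m) Bool} (hT : Computes T g)
    {x y : Fin m → Bool} (hx : x ∈ preim g false) (hy : y ∈ preim g true) :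
    1 ≤ sep T x y := by
  cases T with
  | leaf s =>
    have h1 := hT false x hx
    have h2 := hT true y hy
    rw [DTree.eval] at h1 h2
    rw [h1] at h2
    exact absurd h2 (by simp)
  | node j t0 t1 =>
    rw [sep]
    by_cases h : x j = y j
    · rw [if_pos h]; exact Nat.le_add_left 1 _
    · rw [if_neg h]

open Classical in
/-- The canonical full decision tree for `g`, querying coordinates in order. -/
noncomputable def buildT (g : Set ((Fin m → Bool) × Bool)) :
    List (Fin m) → (Fin m → Bool) → DTree (Fin m) Bool
  | [], a => .leaf (if a ∈ preim g true then true else false)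
  | i :: l, a => .node i (buildT g l (Function.update a i false))
                         (buildT g l (Function.update a i true))

open Classical in
lemma buildT_eval (g : Set ((Fin m → Bool) × Bool)) :
    ∀ (l : List (Fin m)) (a x : Fin m → Bool), (∀ i, i ∉ l → a i = x i) →
      (buildT g l a).eval x = (if x ∈ preim g true then true else false) := by
  intro l
  induction l with
  | nil =>
    intro a x h
    have : a = x := funext fun i => h i List.not_mem_nil
    subst this
    rfl
  | cons i l ih =>
    intro a x h
    have hupd : ∀ c : Bool, x i = c → ∀ j, j ∉ l → Function.update a i c j = x j := by
      intro c hc j hj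
      by_cases hji : j = i
      · subst hji; rw [Function.update_self, hc]
      · rw [Function.update_of_ne hji]
        exact h j (by simp [hji, hj])
    rw [buildT, DTree.eval]
    cases hxi : x i
    · rw [if_neg (by simp [hxi])]
      exact ih _ x (hupd false hxi)
    · rw [if_pos rfl]
      exact ih _ x (hupd true hxi)

lemma buildT_computes (g : Set ((Fin m → Bool) × Bool)) (a : Fin m → Bool) :
    Computes (buildT g (List.finRange m) a) g := by
  intro b x hx
  have := buildT_eval g (List.finRange m) a x (fun i hi => absurd (List.mem_finRange i) hi)
  rw [this]
  cases b
  · rw [if_neg]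
    intro hx1
    exact preim_disjoint hx hx1
  · rw [if_pos hx]

lemma buildT_depth (g : Set ((Fin m → Bool) × Bool)) :
    ∀ (l : List (Fin m)) (a : Fin m → Bool), (buildT g l a).depth ≤ l.length := by
  intro l
  induction l with
  | nil => intro a; simp [buildT, DTree.depth]
  | cons i l ih =>
    intro a
    rw [buildT, DTree.depth, List.length_cons]
    exact Nat.add_le_add_right (max_le (ih _) (ih _)) 1

/-- All decision trees of depth at most `d`. -/
def allTrees (m : ℕ) : ℕ → List (DTree (Fin m) Bool)
  | 0 => [.leaf false, .leaf true]
  | d + 1 => [.leaf false, .leaf true] ++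
      (List.finRange m).flatMap (fun i => (allTrees m d).flatMap
        (fun t0 => (allTrees m d).map (fun t1 => .node i t0 t1)))

lemma mem_allTrees : ∀ (d : ℕ) (T : DTree (Fin m) Bool), T.depth ≤ d → T ∈ allTrees m d := by
  intro d
  induction d with
  | zero =>
    intro T hT
    cases T with
    | leaf s => cases s <;> simp [allTrees]
    | node i t0 t1 => simp [DTree.depth] at hT
  | succ d ih =>
    intro T hT
    cases T with
    | leaf s => cases s <;> simp [allTrees]
    | node i t0 t1 =>
      rw [DTree.depth] at hT
      have h0 : t0.depth ≤ d := le_trans (le_max_left _ _) (Nat.succ_le_succ_iff.mp hT)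
      have h1 : t1.depth ≤ d := le_trans (le_max_right _ _) (Nat.succ_le_succ_iff.mp hT)
      rw [allTrees]
      simp only [List.mem_append, List.mem_flatMap, List.mem_map]
      right
      exact ⟨i, List.mem_finRange i, t0, ih t0 h0, t1, ih t1 h1, rfl⟩

/-- Prune a decision tree with respect to a partial assignment. -/
def prune : DTree (Fin m) Bool → (Fin m → Option Bool) → DTree (Fin m) Bool
  | .leaf s, _ => .leaf s
  | .node i t0 t1, ρ => match ρ i with
      | some true => prune t1 ρ
      | some false => prune t0 ρ
      | none => .node i (prune t0 (Function.update ρ i (some false)))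
                        (prune t1 (Function.update ρ i (some true)))

lemma consist_update {ρ : Fin m → Option Bool} {x : Fin m → Bool} (h : Consist ρ x) (i : Fin m)
    (c : Bool) (hc : x i = c) : Consist (Function.update ρ i (some c)) x := by
  intro j b hj
  by_cases hji : j = i
  · subst hji
    have : some c = some b := by simpa [Function.update_self] using hj
    cases this; exact hc
  · rw [Function.update_of_ne hji] at hj
    exact h j b hj

lemma prune_eval {x : Fin m → Bool} :
    ∀ (T : DTree (Fin m) Bool) (ρ : Fin m → Option Bool),
      Consist ρ x → (prune T ρ).eval x = T.eval x := by
  intro T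
  induction T with
  | leaf s => intro ρ _; rfl
  | node i t0 t1 ih0 ih1 =>
    intro ρ hρ
    rcases hi : ρ i with _ | c
    · rw [prune]
      simp only [hi]
      rw [DTree.eval, DTree.eval]
      cases hxi : x i
      · rw [if_neg Bool.false_ne_true, if_neg Bool.false_ne_true]
        exact ih0 _ (consist_update hρ i false hxi)
      · rw [if_pos rfl, if_pos rfl]
        exact ih1 _ (consist_update hρ i true hxi)
    · have hxi : x i = c := hρ i c hi
      cases c
      · rw [prune]
        simp only [hi]
        rw [DTree.eval, hxi, if_neg Bool.false_ne_true]
        exact ih0 _ hρ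
      · rw [prune]
        simp only [hi]
        rw [DTree.eval, if_pos hxi]
        exact ih1 _ hρ

lemma prune_sep (x y : Fin m → Bool) :
    ∀ (T : DTree (Fin m) Bool) (ρ : Fin m → Option Bool), Consist ρ x → Consist ρ y →
      sep (prune T ρ) x y ≤ sep T x y := by
  intro T
  induction T with
  | leaf s => intro ρ _ _; exact le_refl 0
  | node i t0 t1 ih0 ih1 =>
    intro ρ hx hy
    rcases hi : ρ i with _ | c
    · rw [prune]
      simp only [hi]
      rw [sep, sep]
      by_cases h : x i = y i
      · rw [if_pos h, if_pos h]
        cases hxi : x i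
        · rw [if_neg Bool.false_ne_true, if_neg Bool.false_ne_true]
          exact Nat.add_le_add_right
            (ih0 _ (consist_update hx i false hxi) (consist_update hy i false (h ▸ hxi))) 1
        · rw [if_pos rfl, if_pos rfl]
          exact Nat.add_le_add_right
            (ih1 _ (consist_update hx i true hxi) (consist_update hy i true (h ▸ hxi))) 1
      · rw [if_neg h, if_neg h]
    · have hxi : x i = c := hx i c hi
      have hyi : y i = c := hy i c hi
      have h : x i = y i := by rw [hxi, hyi]
      cases c
      · rw [prune]
        simp only [hi]
        rw [sep, if_pos h, hxi, if_neg Bool.false_ne_true]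
        exact le_trans (ih0 _ hx hy) (Nat.le_succ _)
      · rw [prune]
        simp only [hi]
        rw [sep, if_pos h, hxi, if_pos rfl]
        exact le_trans (ih1 _ hx hy) (Nat.le_succ _)

lemma filter_update_none (ρ : Fin m → Option Bool) (i : Fin m) (c : Bool) :
    (Finset.univ.filter (fun j => Function.update ρ i (some c) j = none)) =
      (Finset.univ.filter (fun j => ρ j = none)).erase i := by
  ext j
  simp only [Finset.mem_filter, Finset.mem_erase, Finset.mem_univ, true_and]
  by_cases hji : j = i
  · subst hji
    simp [Function.update_self]
  · rw [Function.update_of_ne hji]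
    simp [hji]

lemma prune_depth :
    ∀ (T : DTree (Fin m) Bool) (ρ : Fin m → Option Bool),
      (prune T ρ).depth ≤ (Finset.univ.filter (fun i => ρ i = none)).card := by
  intro T
  induction T with
  | leaf s => intro ρ; exact Nat.zero_le _
  | node i t0 t1 ih0 ih1 =>
    intro ρ
    rcases hi : ρ i with _ | c
    · have hmem : i ∈ Finset.univ.filter (fun j => ρ j = none) := by
        simp [hi]
      have hcard : 1 ≤ (Finset.univ.filter (fun j => ρ j = none)).card :=
        Finset.card_pos.mpr ⟨i, hmem⟩
      have herase : ∀ c : Bool,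
          (Finset.univ.filter (fun j => Function.update ρ i (some c) j = none)).card =
            (Finset.univ.filter (fun j => ρ j = none)).card - 1 := by
        intro c
        rw [filter_update_none, Finset.card_erase_of_mem hmem]
      rw [prune]
      simp only [hi]
      rw [DTree.depth]
      have h0 := ih0 (Function.update ρ i (some false))
      have h1 := ih1 (Function.update ρ i (some true))
      rw [herase false] at h0
      rw [herase true] at h1
      omega
    · cases c
      · rw [prune]; simp only [hi]; exact ih0 ρ
      · rw [prune]; simp only [hi]; exact ih1 ρ

end Aux3

section Minimax

/-- Finite-game minimax via the geometric Hahn-Banach theorem: if every distribution on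
columns supported in `P` admits a row with expected payoff at most `v`, then there is a
distribution on rows whose expected payoff is at most `v` against every column in `P`. -/
lemma exists_good_mixed {n : ℕ} {γ : Type} [Fintype γ]
    (M : Fin n → γ → ℝ) (P : Set γ) (q0 : γ) (hq0 : q0 ∈ P) (v : ℝ)
    (hv : ∀ p : γ → ℝ, IsDist p → SuppIn p P → ∃ i, ∑ q, p q * M i q ≤ v) :
    ∃ μ : Fin n → ℝ, IsDist μ ∧ ∀ q ∈ P, ∑ i, μ i * M i q ≤ v := by
  classical
  set O : Set (Fin n → ℝ) := {z | ∀ i, v < z i} with hO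
  set C : Set (Fin n → ℝ) := {z | ∃ p : γ → ℝ, IsDist p ∧ SuppIn p P ∧
    z = fun i => ∑ q, p q * M i q} with hC
  have hOinter : O = ⋂ i : Fin n, (fun z : Fin n → ℝ => z i) ⁻¹' Set.Ioi v := by
    ext z; simp [hO, Set.mem_iInter]
  have hOopen : IsOpen O := by
    rw [hOinter]
    exact isOpen_iInter_of_finite fun i => (isOpen_Ioi).preimage (continuous_apply i)
  have hOconv : Convex ℝ O := by
    rw [hOinter]
    exact convex_iInter fun i =>
      show Convex ℝ (⇑(LinearMap.proj (R := ℝ) (φ := fun _ : Fin n => ℝ) i) ⁻¹' Set.Ioi v) from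
        (convex_Ioi v).linear_preimage _
  have hCconv : Convex ℝ C := by
    rintro z1 ⟨p1, hp1, hs1, rfl⟩ z2 ⟨p2, hp2, hs2, rfl⟩ a b ha hb hab
    refine ⟨fun q => a * p1 q + b * p2 q, ⟨fun q => by
        have := hp1.1 q; have := hp2.1 q; positivity, ?_⟩, ?_, ?_⟩
    · rw [Finset.sum_add_distrib, ← Finset.mul_sum, ← Finset.mul_sum, hp1.2, hp2.2,
        mul_one, mul_one, hab]
    · intro q hq
      by_cases h1 : p1 q = 0
      · by_cases h2 : p2 q = 0
        · exact absurd (show a * p1 q + b * p2 q = 0 by rw [h1, h2]; ring) hq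
        · exact hs2 q h2
      · exact hs1 q h1
    · funext i
      simp only [Pi.add_apply, Pi.smul_apply, smul_eq_mul]
      rw [Finset.mul_sum, Finset.mul_sum, ← Finset.sum_add_distrib]
      congr 1; funext q; ring
  have hdisj : Disjoint O C := by
    rw [Set.disjoint_left]
    rintro z hzO ⟨p, hp, hs, rfl⟩
    obtain ⟨i, hi⟩ := hv p hp hs
    exact absurd hi (not_le.mpr (hzO i))
  obtain ⟨f, u, hfO, hfC⟩ := geometric_hahn_banach_open hOconv hOopen hCconv hdisj
  -- coefficients of f
  set e : Fin n → (Fin n → ℝ) := fun i => fun j => if i = j then 1 else 0 with he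
  have hfz : ∀ z : Fin n → ℝ, f z = ∑ i, z i * f (e i) := by
    intro z
    conv_lhs => rw [pi_eq_sum_univ z, map_sum]
    congr 1
    funext i
    rw [map_smul, smul_eq_mul]
  -- the constant functions belong to O when the constant exceeds v
  have hconst : ∀ t : ℝ, v < t → (fun _ : Fin n => t) ∈ O := fun t ht i => ht
  have hfconst : ∀ t : ℝ, f (fun _ => t) = t * ∑ i, f (e i) := by
    intro t
    rw [hfz]
    exact Finset.mul_sum _ _ _ |>.symm
  -- nonnegativity of the coefficients of -f
  have hnonneg : ∀ i, f (e i) ≤ 0 := by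
    intro i0
    by_contra hpos
    push_neg at hpos
    set t : ℝ := max 0 ((u - f (fun _ => v + 1)) / f (e i0)) + 1 with ht
    have htpos : 0 ≤ t := by positivity
    have hzO : ((fun _ : Fin n => v + 1) + t • e i0) ∈ O := by
      intro i
      simp only [Pi.add_apply, Pi.smul_apply, he, smul_eq_mul]
      by_cases h : i0 = i <;> simp [h] <;> nlinarith
    have hlt := hfO _ hzO
    rw [map_add, map_smul, smul_eq_mul] at hlt
    have hge : (u - f (fun _ => v + 1)) / f (e i0) + 1 ≤ t := by
      rw [ht]
      have := le_max_right (0:ℝ) ((u - f (fun _ => v + 1)) / f (e i0))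
      linarith
    have : u - f (fun _ => v + 1) + f (e i0) ≤ t * f (e i0) := by
      have := mul_le_mul_of_nonneg_right hge (le_of_lt hpos)
      rwa [add_mul, div_mul_cancel₀ _ (ne_of_gt hpos), one_mul] at this
    linarith
  -- C is nonempty via the point mass at q0
  have hCne : (fun i => ∑ q, (if q = q0 then (1:ℝ) else 0) * M i q) ∈ C := by
    refine ⟨fun q => if q = q0 then 1 else 0, ⟨fun q => by positivity, by simp⟩, ?_, rfl⟩
    intro q hq
    by_cases h : q = q0
    · exact h ▸ hq0
    · exact absurd (by simp [h]) hq
  have hfne : ∃ i, f (e i) ≠ 0 := by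
    by_contra hall
    push_neg at hall
    have hzero : ∀ z, f z = 0 := by
      intro z; rw [hfz]
      exact Finset.sum_eq_zero fun i _ => by rw [hall i, mul_zero]
    have h1 : (0:ℝ) < u := by
      have := hfO _ (hconst (v+1) (by linarith))
      rwa [hzero] at this
    have h2 : u ≤ 0 := by
      have := hfC _ hCne
      rwa [hzero] at this
    linarith
  set s0 : ℝ := ∑ i, -f (e i) with hs0
  have hs0pos : 0 < s0 := by
    obtain ⟨i0, hi0⟩ := hfne
    exact Finset.sum_pos' (fun i _ => by linarith [hnonneg i])
      ⟨i0, Finset.mem_univ i0, by cases (lt_or_eq_of_le (hnonneg i0)) with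
        | inl h => linarith
        | inr h => exact absurd h hi0⟩
  have hsum_f : ∑ i, f (e i) = -s0 := by rw [hs0, Finset.sum_neg_distrib, neg_neg]
  -- -u ≤ v * s0
  have hkey : -u ≤ v * s0 := by
    by_contra hcon
    push_neg at hcon
    set ε : ℝ := (-u - v * s0) / (2 * s0) with hε
    have hεpos : 0 < ε := by
      apply div_pos; linarith; linarith
    have := hfO _ (hconst (v + ε) (by linarith))
    rw [hfconst, hsum_f] at this
    have hexp : (v + ε) * (-s0) = -v*s0 - ε * s0 := by ring
    rw [hexp] at this
    have hεs : ε * s0 = (-u - v * s0) / 2 := by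
      rw [hε]; field_simp
    rw [hεs] at this
    linarith
  -- conclusion
  refine ⟨fun i => -f (e i) / s0, ⟨fun i => by
      have := hnonneg i
      apply div_nonneg <;> linarith, ?_⟩, ?_⟩
  · rw [← Finset.sum_div, ← hs0, div_self (ne_of_gt hs0pos)]
  · intro q hq
    -- the point mass at q gives an element of C
    have hzC : (fun i => ∑ q', (if q' = q then (1:ℝ) else 0) * M i q') ∈ C := by
      refine ⟨fun q' => if q' = q then 1 else 0, ⟨fun q' => by positivity, by simp⟩, ?_, rfl⟩
      intro q' hq'
      by_cases h : q' = q
      · exact h ▸ hq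
      · exact absurd (by simp [h]) hq'
    have hval : ∀ i, ∑ q', (if q' = q then (1:ℝ) else 0) * M i q' = M i q := by
      intro i
      rw [Finset.sum_congr rfl (fun q' _ => by
        rw [ite_mul, one_mul, zero_mul]),
        Finset.sum_ite_eq' Finset.univ q (fun q' => M i q'), if_pos (Finset.mem_univ q)]
    have hub := hfC _ hzC
    rw [hfz] at hub
    have hub2 : u ≤ ∑ i, M i q * f (e i) := by
      calc u ≤ _ := hub
        _ = ∑ i, M i q * f (e i) := Finset.sum_congr rfl (fun i _ => by rw [hval i])
    have hfinal : ∑ i, -f (e i) * M i q ≤ v * s0 := by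
      have hneg : ∑ i, -f (e i) * M i q = -(∑ i, M i q * f (e i)) := by
        rw [← Finset.sum_neg_distrib]
        congr 1; funext i; ring
      rw [hneg]; linarith
    show ∑ i, (-f (e i) / s0) * M i q ≤ v
    have hdiv : ∑ i, (-f (e i) / s0) * M i q = (∑ i, -f (e i) * M i q) / s0 := by
      rw [Finset.sum_div]
      exact Finset.sum_congr rfl fun i _ => by ring
    rw [hdiv, div_le_iff₀ hs0pos]
    linarith

end Minimax

section Assemble
variable {m : ℕ}

/-- The set of costs of randomized algorithms measured by expected separation depth. -/
def Aset (m : ℕ) (g : Set ((Fin m → Bool) × Bool)) : Set ℝ :=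
  { c : ℝ | ∃ (k : ℕ) (wt : Fin k → ℝ) (T : Fin k → DTree (Fin m) Bool),
      IsDist wt ∧ (∀ i, Computes (T i) g) ∧
      ∀ (b : Bool) (x y : Fin m → Bool), x ∈ preim g b → y ∈ preim g (!b) →
        ∑ i, wt i * (sep (T i) x y : ℝ) ≤ c }

/-- The set of values of distributions on valid pairs. -/
def Bset (m : ℕ) (g : Set ((Fin m → Bool) × Bool)) : Set ℝ :=
  { c : ℝ | ∃ p : ((Fin m → Bool) × (Fin m → Bool)) → ℝ,
      IsDist p ∧ SuppIn p {q | q.1 ∈ preim g false ∧ q.2 ∈ preim g true} ∧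
      c = sInf { e : ℝ | ∃ T : DTree (Fin m) Bool, Computes T g ∧
        e = ∑ q : (Fin m → Bool) × (Fin m → Bool), p q * (sep T q.1 q.2 : ℝ) } }

/-- The defining set of `RS`. -/
def Sset (m : ℕ) (g : Set ((Fin m → Bool) × Bool)) : Set ℝ :=
  { c : ℝ | ∃ (k : ℕ) (wt : Fin k → ℝ) (T : Fin k → QTree (Fin m) Bool),
    IsDist wt ∧ (∀ i, SabComputes (T i) g) ∧
    ∀ w : Fin m → Sab4, SabValid g w → ∑ i, wt i * ((T i).queries w : ℝ) ≤ c }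

lemma sum_wt_mono {k : ℕ} {wt : Fin k → ℝ} (h0 : ∀ i, 0 ≤ wt i) {f f' : Fin k → ℕ}
    (hff : ∀ i, f i ≤ f' i) : ∑ i, wt i * (f i : ℝ) ≤ ∑ i, wt i * (f' i : ℝ) :=
  Finset.sum_le_sum fun i _ =>
    mul_le_mul_of_nonneg_left (Nat.cast_le.mpr (hff i)) (h0 i)

lemma consist_none {x : Fin m → Bool} : Consist (fun _ : Fin m => (none : Option Bool)) x :=
  fun _ _ hj => by cases hj

lemma Sset_eq_Aset (g : Set ((Fin m → Bool) × Bool)) : Sset m g = Aset m g := by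
  apply Set.Subset.antisymm
  · rintro c ⟨k, wt, T, hdist, hcomp, hcost⟩
    refine ⟨k, wt, fun i => toD g (T i) (fun _ => none), hdist, ?_, ?_⟩
    · intro i
      intro b x hx
      exact toD_computes (T i) (fun _ => none) (fun w hw _ => hcomp i w hw) b x hx consist_none
    · intro b x y hx hy
      cases b
      · calc ∑ i, wt i * (sep (toD g (T i) (fun _ => none)) x y : ℝ)
            ≤ ∑ i, wt i * ((T i).queries (mix x y) : ℝ) :=
              sum_wt_mono hdist.1 (fun i => sep_toD_le x y (T i) _)
          _ ≤ c := hcost _ (mix_sabValid hx hy)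
      · have hsymm : ∀ i, sep (toD g (T i) (fun _ => none)) x y
            = sep (toD g (T i) (fun _ => none)) y x := fun i => sep_comm _ x y
        calc ∑ i, wt i * (sep (toD g (T i) (fun _ => none)) x y : ℝ)
            = ∑ i, wt i * (sep (toD g (T i) (fun _ => none)) y x : ℝ) := by
              exact Finset.sum_congr rfl fun i _ => by rw [hsymm i]
          _ ≤ ∑ i, wt i * ((T i).queries (mix y x) : ℝ) :=
              sum_wt_mono hdist.1 (fun i => sep_toD_le y x (T i) _)
          _ ≤ c := hcost _ (mix_sabValid hy hx)
  · rintro c ⟨k, wt, T, hdist, hcomp, hcost⟩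
    refine ⟨k, wt, fun i => toQ (T i), hdist, fun i => toQ_computes (hcomp i), ?_⟩
    intro w hw
    obtain ⟨hspec, ⟨x, hx, hxc⟩, ⟨y, hy, hyc⟩⟩ := hw
    calc ∑ i, wt i * ((toQ (T i)).queries w : ℝ)
        ≤ ∑ i, wt i * (sep (T i) x y : ℝ) :=
          sum_wt_mono hdist.1 (fun i => toQ_queries_le (T i) x y w hxc hyc)
      _ ≤ c := hcost false x y hx hy

end Assemble

section Assemble2
variable {m : ℕ}

lemma sum_swap_mul {α β : Type} [Fintype α] [Fintype β] (a : α → ℝ) (b : β → ℝ)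
    (c : α → β → ℝ) :
    ∑ i, a i * ∑ q, b q * c i q = ∑ q, b q * ∑ i, a i * c i q := by
  simp_rw [Finset.mul_sum]
  rw [Finset.sum_comm]
  exact Finset.sum_congr rfl fun q _ => Finset.sum_congr rfl fun i _ => by ring

open Classical in
/-- The finite list of decision trees of depth at most `m` computing `g`. -/
noncomputable def goodTrees (m : ℕ) (g : Set ((Fin m → Bool) × Bool)) :
    List (DTree (Fin m) Bool) :=
  (allTrees m m).filter (fun T => decide (Computes T g))

open Classical in
lemma mem_goodTrees_iff {g : Set ((Fin m → Bool) × Bool)} {T : DTree (Fin m) Bool} :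
    T ∈ goodTrees m g ↔ T ∈ allTrees m m ∧ Computes T g := by
  rw [goodTrees, List.mem_filter]
  simp only [decide_eq_true_eq]

lemma exists_pos_of_dist {k : ℕ} {wt : Fin k → ℝ} (h : IsDist wt) : ∃ i, 0 < wt i := by
  have hne : ∃ i ∈ Finset.univ, wt i ≠ 0 :=
    Finset.exists_ne_zero_of_sum_ne_zero (by rw [h.2]; exact one_ne_zero)
  obtain ⟨i, _, hi⟩ := hne
  exact ⟨i, lt_of_le_of_ne (h.1 i) (Ne.symm hi)⟩

/-- The main minimax equality. -/
lemma Aset_inf_eq_Bset_sup (g : Set ((Fin m → Bool) × Bool)) :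
    sInf (Aset m g) = sSup (Bset m g) := by
  classical
  by_cases hval : ∃ q : (Fin m → Bool) × (Fin m → Bool),
      q.1 ∈ preim g false ∧ q.2 ∈ preim g true
  · obtain ⟨⟨x0, y0⟩, hx0, hy0⟩ := hval
    set γ := (Fin m → Bool) × (Fin m → Bool)
    set Pset : Set γ := {q | q.1 ∈ preim g false ∧ q.2 ∈ preim g true} with hPset
    set full : DTree (Fin m) Bool := buildT g (List.finRange m) x0 with hfull
    have hfullc : Computes full g := buildT_computes g x0
    have hfulld : (full.depth : ℝ) ≤ m := by
      have := buildT_depth g (List.finRange m) x0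
      rw [List.length_finRange] at this
      exact_mod_cast this
    have hsepfull : ∀ q : γ, (sep full q.1 q.2 : ℝ) ≤ m :=
      fun q => le_trans (Nat.cast_le.mpr (sep_le_depth full q.1 q.2)) hfulld
    -- facts about the inner infimum sets
    set Ep : (γ → ℝ) → Set ℝ := fun p => { e : ℝ | ∃ T : DTree (Fin m) Bool, Computes T g ∧
      e = ∑ q : γ, p q * (sep T q.1 q.2 : ℝ) } with hEp
    have hEpne : ∀ p : γ → ℝ, (Ep p).Nonempty :=
      fun p => ⟨_, full, hfullc, rfl⟩
    have hEpbdd : ∀ p : γ → ℝ, (∀ q, 0 ≤ p q) → ∀ e ∈ Ep p, (0:ℝ) ≤ e := by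
      rintro p hp e ⟨T, hT, rfl⟩
      exact Finset.sum_nonneg fun q _ => mul_nonneg (hp q) (Nat.cast_nonneg _)
    have hEple : ∀ p : γ → ℝ, IsDist p → sInf (Ep p) ≤ m := by
      intro p hp
      have hmem : (∑ q : γ, p q * (sep full q.1 q.2 : ℝ)) ∈ Ep p := ⟨full, hfullc, rfl⟩
      have hle : ∑ q : γ, p q * (sep full q.1 q.2 : ℝ) ≤ m := by
        calc ∑ q : γ, p q * (sep full q.1 q.2 : ℝ) ≤ ∑ q : γ, p q * m :=
            Finset.sum_le_sum fun q _ => mul_le_mul_of_nonneg_left (hsepfull q) (hp.1 q)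
          _ = m := by rw [← Finset.sum_mul, hp.2, one_mul]
      exact le_trans (csInf_le ⟨0, fun e he => hEpbdd p hp.1 e he⟩ hmem) hle
    have hBbdd : ∀ c ∈ Bset m g, c ≤ m := by
      rintro c ⟨p, hp, hsupp, rfl⟩
      exact hEple p hp
    have hBbddAbove : BddAbove (Bset m g) := ⟨m, fun c hc => hBbdd c hc⟩
    have hBne : (Bset m g).Nonempty := by
      refine ⟨_, fun q => if q = (x0, y0) then 1 else 0, ⟨fun q => by positivity, by simp⟩,
        ?_, rfl⟩
      intro q hq
      by_cases h : q = (x0, y0)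
      · subst h; exact ⟨hx0, hy0⟩
      · exact absurd (by simp [h]) hq
    have hAlb : ∀ c ∈ Aset m g, (0:ℝ) ≤ c := by
      rintro c ⟨k, wt, T, hdist, hcomp, hcost⟩
      have h1 := hcost false x0 y0 hx0 hy0
      have h2 : (0:ℝ) ≤ ∑ i, wt i * (sep (T i) x0 y0 : ℝ) :=
        Finset.sum_nonneg fun i _ => mul_nonneg (hdist.1 i) (Nat.cast_nonneg _)
      linarith
    have hAbdd : BddBelow (Aset m g) := ⟨0, fun c hc => hAlb c hc⟩
    have hAne : (Aset m g).Nonempty := by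
      refine ⟨m, 1, fun _ => 1, fun _ => full, ⟨fun _ => zero_le_one, by simp⟩, fun _ => hfullc, ?_⟩
      intro b x y hx hy
      simpa using hsepfull (x, y)
    -- easy direction: sSup B ≤ sInf A
    have hBA : sSup (Bset m g) ≤ sInf (Aset m g) := by
      apply csSup_le hBne
      rintro c ⟨p, hp, hsupp, rfl⟩
      apply le_csInf hAne
      rintro cA ⟨k, wt, T, hdist, hcomp, hcost⟩
      -- average over the tree distribution
      have hswap : ∑ i, wt i * ∑ q : γ, p q * (sep (T i) q.1 q.2 : ℝ)
          = ∑ q : γ, p q * ∑ i, wt i * (sep (T i) q.1 q.2 : ℝ) :=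
        sum_swap_mul wt p (fun i q => (sep (T i) q.1 q.2 : ℝ))
      have htot : ∑ i, wt i * ∑ q : γ, p q * (sep (T i) q.1 q.2 : ℝ) ≤ cA := by
        rw [hswap]
        calc ∑ q : γ, p q * ∑ i, wt i * (sep (T i) q.1 q.2 : ℝ)
            ≤ ∑ q : γ, p q * cA := by
              apply Finset.sum_le_sum
              intro q _
              by_cases hq : p q = 0
              · rw [hq, zero_mul, zero_mul]
              · have hqP := hsupp q hq
                exact mul_le_mul_of_nonneg_left
                  (hcost false q.1 q.2 hqP.1 hqP.2) (hp.1 q)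
          _ = cA := by rw [← Finset.sum_mul, hp.2, one_mul]
      have hex : ∃ i, ∑ q : γ, p q * (sep (T i) q.1 q.2 : ℝ) ≤ cA := by
        by_contra hcon
        push_neg at hcon
        obtain ⟨i0, hi0⟩ := exists_pos_of_dist hdist
        have hlt : ∑ i, wt i * cA < ∑ i, wt i * ∑ q : γ, p q * (sep (T i) q.1 q.2 : ℝ) := by
          apply Finset.sum_lt_sum
          · intro i _
            exact mul_le_mul_of_nonneg_left (le_of_lt (hcon i)) (hdist.1 i)
          · exact ⟨i0, Finset.mem_univ i0, mul_lt_mul_of_pos_left (hcon i0) hi0⟩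
        rw [← Finset.sum_mul, hdist.2, one_mul] at hlt
        linarith
      obtain ⟨i, hi⟩ := hex
      exact le_trans (csInf_le ⟨0, fun e he => hEpbdd p hp.1 e he⟩ ⟨T i, hcomp i, rfl⟩) hi
    -- hard direction: sInf A ≤ sSup B, via minimax
    have hAB : sInf (Aset m g) ≤ sSup (Bset m g) := by
      set L : List (DTree (Fin m) Bool) := goodTrees m g with hL
      have hmemL : ∀ T : DTree (Fin m) Bool, Computes T g → T.depth ≤ m →
          ∃ i : Fin L.length, L.get i = T := by
        intro T hT hd
        have : T ∈ L := mem_goodTrees_iff.mpr ⟨mem_allTrees m T hd, hT⟩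
        obtain ⟨i, hi⟩ := List.mem_iff_get.mp this
        exact ⟨i, hi⟩
      have hLcomp : ∀ i : Fin L.length, Computes (L.get i) g := by
        intro i
        have h1 : L.get i ∈ L := List.get_mem L i
        exact (mem_goodTrees_iff.mp h1).2
      set M : Fin L.length → γ → ℝ := fun i q => (sep (L.get i) q.1 q.2 : ℝ) with hM
      have hv : ∀ p : γ → ℝ, IsDist p → SuppIn p Pset →
          ∃ i, ∑ q, p q * M i q ≤ sSup (Bset m g) := by
        intro p hp hsupp
        have hcB : sInf (Ep p) ≤ sSup (Bset m g) :=
          le_csSup hBbddAbove ⟨p, hp, hsupp, rfl⟩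
        -- an index for the full tree
        obtain ⟨ifull, hifull⟩ := hmemL full hfullc (by
          have := buildT_depth g (List.finRange m) x0
          rwa [List.length_finRange] at this)
        obtain ⟨imin, _, hmin⟩ := Finset.exists_min_image Finset.univ
          (fun i => ∑ q, p q * M i q) ⟨ifull, Finset.mem_univ ifull⟩
        refine ⟨imin, le_trans ?_ hcB⟩
        apply le_csInf (hEpne p)
        rintro e ⟨T, hT, rfl⟩
        have hpruned : Computes (prune T (fun _ => none)) g := by
          intro b x hx
          rw [prune_eval T _ consist_none]
          exact hT b x hx
        have hdepth : (prune T (fun _ => none)).depth ≤ m := by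
          have := prune_depth T (fun _ => none)
          simpa using this
        obtain ⟨i', hi'⟩ := hmemL _ hpruned hdepth
        have hle : ∑ q, p q * M i' q ≤ ∑ q : γ, p q * (sep T q.1 q.2 : ℝ) := by
          apply Finset.sum_le_sum
          intro q _
          apply mul_le_mul_of_nonneg_left _ (hp.1 q)
          rw [hM]
          simp only [hi']
          exact_mod_cast Nat.cast_le.mpr (prune_sep q.1 q.2 T _ consist_none consist_none)
        exact le_trans (hmin i' (Finset.mem_univ i')) hle
      obtain ⟨μ, hμ, hμcost⟩ := exists_good_mixed M Pset (x0, y0) ⟨hx0, hy0⟩ (sSup (Bset m g)) hv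
      have hmem : sSup (Bset m g) ∈ Aset m g := by
        refine ⟨L.length, μ, fun i => L.get i, hμ, hLcomp, ?_⟩
        intro b x y hx hy
        cases b
        · exact hμcost (x, y) ⟨hx, hy⟩
        · have := hμcost (y, x) ⟨hy, hx⟩
          calc ∑ i, μ i * (sep (L.get i) x y : ℝ)
              = ∑ i, μ i * (sep (L.get i) y x : ℝ) :=
                Finset.sum_congr rfl fun i _ => by rw [sep_comm]
            _ ≤ sSup (Bset m g) := this
      exact csInf_le hAbdd hmem
    exact le_antisymm hAB hBA
  · -- degenerate case: no valid pair
    have hBempty : Bset m g = ∅ := by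
      ext c
      simp only [Set.mem_empty_iff_false, iff_false]
      rintro ⟨p, hp, hsupp, rfl⟩
      have : ∃ q ∈ Finset.univ, p q ≠ 0 :=
        Finset.exists_ne_zero_of_sum_ne_zero (by rw [hp.2]; exact one_ne_zero)
      obtain ⟨q, _, hq⟩ := this
      exact hval ⟨q, hsupp q hq⟩
    have hAuniv : ∀ c : ℝ, c ∈ Aset m g := by
      intro c
      by_cases hf : ∃ x, x ∈ preim g false
      · have ht : ¬ ∃ y, y ∈ preim g true := by
          rintro ⟨y, hy⟩
          obtain ⟨x, hx⟩ := hf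
          exact hval ⟨(x, y), hx, hy⟩
        refine ⟨1, fun _ => 1, fun _ => DTree.leaf false, ⟨fun _ => zero_le_one, by simp⟩, ?_, ?_⟩
        · intro i b x hx
          cases b
          · rfl
          · exact absurd ⟨x, hx⟩ ht
        · intro b x y hx hy
          cases b
          · exact absurd ⟨y, hy⟩ ht
          · exact absurd ⟨x, hx⟩ ht
      · refine ⟨1, fun _ => 1, fun _ => DTree.leaf true, ⟨fun _ => zero_le_one, by simp⟩, ?_, ?_⟩
        · intro i b x hx
          cases b
          · exact absurd ⟨x, hx⟩ hf
          · rfl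
        · intro b x y hx hy
          cases b
          · exact absurd ⟨x, hx⟩ hf
          · exact absurd ⟨y, hy⟩ hf
    have hnb : ¬ BddBelow (Aset m g) := by
      rintro ⟨b, hb⟩
      have := hb (hAuniv (b - 1))
      linarith
    rw [hBempty, Real.sSup_empty, Real.sInf_of_not_bddBelow hnb]

end Assemble2

/-- Alternative characterization of sabotage complexity:
`RS(g) = min_𝒯 max_{x,y : g(x)≠g(y)} E_{T∼𝒯}[sep_T(x,y)]`, where `𝒯` ranges over zero-error
randomized algorithms for `g` (distributions over deterministic trees computing `g`), and this
in turn equals `max_p min_T E_{(x,y)∼p}[sep_T(x,y)]`, where `p` ranges over distributions on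
pairs of valid inputs with `g(x) = 0`, `g(y) = 1` and `T` over deterministic trees computing
`g`. -/
theorem RS_alt_characterization (m : ℕ) (g : Set ((Fin m → Bool) × Bool)) :
    RS g =
      sInf { c : ℝ | ∃ (k : ℕ) (wt : Fin k → ℝ) (T : Fin k → DTree (Fin m) Bool),
        IsDist wt ∧ (∀ i, Computes (T i) g) ∧
        ∀ (b : Bool) (x y : Fin m → Bool), x ∈ preim g b → y ∈ preim g (!b) →
          ∑ i, wt i * (sep (T i) x y : ℝ) ≤ c } ∧
    RS g =
      sSup { c : ℝ | ∃ p : ((Fin m → Bool) × (Fin m → Bool)) → ℝ,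
        IsDist p ∧ SuppIn p {q | q.1 ∈ preim g false ∧ q.2 ∈ preim g true} ∧
        c = sInf { e : ℝ | ∃ T : DTree (Fin m) Bool, Computes T g ∧
          e = ∑ q : (Fin m → Bool) × (Fin m → Bool), p q * (sep T q.1 q.2 : ℝ) } } := by
  constructor
  · exact congrArg sInf (Sset_eq_Aset g)
  · exact (congrArg sInf (Sset_eq_Aset g)).trans (Aset_inf_eq_Bset_sup g)
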